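/- Let B = {x_1, …, x_m} be a basis of ℝ^m and let ξ_1, …, ξ_r (r ≤ m) be linearly independent vectors in ℝ^m. Then there exists a subset I ⊆ {1,…,m} of cardinality r such that |det(⟨x_i, ξ_j⟩)_{i∈I, j≤r}| ≥ C_B · ‖ξ_1 ∧ ⋯ ∧ ξ_r‖, where C_B > 0 is a constant depending only on the basis B (and not on the ξ_j). -/

import Mathlib

open Matrix

open scoped RealInnerProductSpace

private lemma aux_sort {m r : ℕ} (A : Matrix (Fin m) (Fin r) ℝ) (ι : Fin r → Fin m)
    (hι : Function.Injective ι) :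
    ∃ I : Fin r → Fin m, StrictMono I ∧
      |(A.submatrix I id).det| = |(A.submatrix ι id).det| := by
  classical
  set t : Finset (Fin m) := Finset.image ι Finset.univ with ht_def
  have ht : t.card = r := by
    rw [ht_def, Finset.card_image_of_injective _ hι, Finset.card_univ, Fintype.card_fin]
  have hmem : ∀ i, ι i ∈ t := fun i => Finset.mem_image_of_mem ι (Finset.mem_univ i)
  refine ⟨t.orderEmbOfFin ht, (t.orderEmbOfFin ht).strictMono, ?_⟩
  set σ' : Fin r → Fin r := fun i => (t.orderIsoOfFin ht).symm ⟨ι i, hmem i⟩ with hσ'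
  have hσinj : Function.Injective σ' := by
    intro a b hab
    apply hι
    have := congrArg (fun x => ((t.orderIsoOfFin ht) x : Fin m)) hab
    simpa [hσ'] using this
  have hbij := Finite.injective_iff_bijective.mp hσinj
  set σ : Equiv.Perm (Fin r) := Equiv.ofBijective σ' hbij with hσ
  have hIσ : ∀ i, t.orderEmbOfFin ht (σ i) = ι i := by
    intro i
    have : (t.orderIsoOfFin ht) (σ' i) = ⟨ι i, hmem i⟩ :=
      (t.orderIsoOfFin ht).apply_symm_apply _
    have := congrArg Subtype.val this
    simpa [Finset.coe_orderIsoOfFin_apply, hσ] using this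
  have hsub : A.submatrix ι id = (A.submatrix (t.orderEmbOfFin ht) id).submatrix σ id := by
    ext i j
    simp [Matrix.submatrix_apply, hIσ]
  rw [hsub, Matrix.det_permute, abs_mul]
  rcases Int.units_eq_one_or (Equiv.Perm.sign σ) with h | h <;> simp [h]

private lemma aux_minor {m r : ℕ} (A : Matrix (Fin m) (Fin r) ℝ)
    (h : Submodule.span ℝ (Set.range fun i => A i) = ⊤) :
    ∃ I : Fin r → Fin m, StrictMono I ∧ (A.submatrix I id).det ≠ 0 := by
  classical
  obtain ⟨sset, hsub, hspan, hli⟩ :=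
    exists_linearIndependent ℝ (Set.range fun i => A i)
  rw [h] at hspan
  haveI : Fintype sset := ((Set.finite_range _).subset hsub).fintype
  have hB : Module.Basis sset ℝ (Fin r → ℝ) :=
    Module.Basis.mk hli (by rw [Subtype.range_coe, hspan])
  have hcard : Fintype.card sset = r := by
    have h1 := Module.finrank_eq_card_basis hB
    rw [Module.finrank_fin_fun] at h1
    omega
  set e : Fin r ≃ sset := (Fintype.equivFinOfCardEq hcard).symm with he
  have hex : ∀ x : sset, ∃ i, A i = x := fun x => hsub x.2
  choose g hg using hex
  set ι : Fin r → Fin m := fun k => g (e k) with hι_def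
  have hι : Function.Injective ι := by
    intro a b hab
    apply e.injective
    apply Subtype.val_injective
    rw [← hg (e a), ← hg (e b)]
    exact congrArg A hab
  have hrows' : LinearIndependent ℝ (fun i => (A.submatrix ι id) i) := by
    have heq : (fun i => (A.submatrix ι id) i) = Subtype.val ∘ e := by
      funext i
      exact hg (e i)
    rw [heq]
    exact hli.comp e e.injective
  have hdet : (A.submatrix ι id).det ≠ 0 := by
    have hu : IsUnit (A.submatrix ι id) := Matrix.linearIndependent_rows_iff_isUnit.mp hrows'
    have := (Matrix.isUnit_iff_isUnit_det _).mp hu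
    exact this.ne_zero
  obtain ⟨I, hImono, habs⟩ := aux_sort A ι hι
  refine ⟨I, hImono, ?_⟩
  intro h0
  rw [h0, abs_zero] at habs
  exact hdet (abs_eq_zero.mp habs.symm)

private lemma aux_inner_basis_zero {m : ℕ} (b : Module.Basis (Fin m) ℝ (EuclideanSpace ℝ (Fin m)))
    (v : EuclideanSpace ℝ (Fin m)) (h : ∀ i, ⟪b i, v⟫ = 0) : v = 0 := by
  have hv : ⟪∑ i, b.repr v i • b i, v⟫ = 0 := by
    rw [sum_inner]
    simp only [real_inner_smul_left]
    simp [h]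
  rw [b.sum_repr v] at hv
  exact inner_self_eq_zero.mp hv

private lemma aux_pos {m r : ℕ} (b : Module.Basis (Fin m) ℝ (EuclideanSpace ℝ (Fin m)))
    (ξ : Fin r → EuclideanSpace ℝ (Fin m)) (hξ : LinearIndependent ℝ ξ) :
    ∃ I : Fin r → Fin m, StrictMono I ∧
      (Matrix.of fun i j => (⟪b (I i), ξ j⟫ : ℝ)).det ≠ 0 := by
  classical
  set A : Matrix (Fin m) (Fin r) ℝ := Matrix.of fun i j => ⟪b i, ξ j⟫ with hA
  set rows : Fin m → EuclideanSpace ℝ (Fin r) :=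
    fun i => (WithLp.equiv 2 (Fin r → ℝ)).symm (A i) with hrows_def
  have horth : (Submodule.span ℝ (Set.range rows))ᗮ = ⊥ := by
    rw [Submodule.eq_bot_iff]
    intro c hc
    have hc' : ∀ i, ⟪rows i, c⟫ = 0 := fun i =>
      (Submodule.mem_orthogonal _ c).1 hc _ (Submodule.subset_span ⟨i, rfl⟩)
    have hsum : ∀ i, ⟪b i, ∑ j, c j • ξ j⟫ = 0 := by
      intro i
      rw [inner_sum]
      have h0 := hc' i
      rw [PiLp.inner_apply] at h0
      simp only [RCLike.inner_apply, starRingEnd_apply, star_trivial] at h0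
      rw [show (∑ j, ⟪b i, c j • ξ j⟫) = ∑ j, rows i j * c j from
        Finset.sum_congr rfl (fun j _ => by
          rw [real_inner_smul_right, mul_comm (c j)]; rfl)]
      rw [← h0]; exact Finset.sum_congr rfl fun j _ => mul_comm _ _
    have hzero : (∑ j, c j • ξ j) = 0 := aux_inner_basis_zero b _ hsum
    have hcz := Fintype.linearIndependent_iff.mp hξ c hzero
    ext j
    exact hcz j
  have hspan := Submodule.orthogonal_eq_bot_iff.mp horth
  have hspan' : Submodule.span ℝ (Set.range fun i => A i) = ⊤ := by
    have h1 := congrArg (Submodule.map (WithLp.linearEquiv 2 ℝ (Fin r → ℝ)).toLinearMap) hspan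
    rw [Submodule.map_span, Submodule.map_top, LinearEquiv.range, ← Set.range_comp] at h1
    convert h1 using 3
    all_goals rfl
  obtain ⟨I, hImono, hdet⟩ := aux_minor A hspan'
  refine ⟨I, hImono, ?_⟩
  have heq : (Matrix.of fun i j => (⟪b (I i), ξ j⟫ : ℝ)) = A.submatrix I id := by
    ext i j
    simp [hA, Matrix.submatrix_apply]
  rw [heq]
  exact hdet

theorem exists_subset_det_ge {m r : ℕ} (hr : r ≤ m)
    (b : Module.Basis (Fin m) ℝ (EuclideanSpace ℝ (Fin m))) :
    ∃ C > 0, ∀ ξ : Fin r → EuclideanSpace ℝ (Fin m), LinearIndependent ℝ ξ →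
      ∃ I : Fin r → Fin m, StrictMono I ∧
        C * Real.sqrt (Matrix.det (Matrix.of fun i j => (inner ℝ (ξ i) (ξ j) : ℝ))) ≤
          |Matrix.det (Matrix.of fun i j => (inner ℝ (b (I i)) (ξ j) : ℝ))| := by
  classical
  set s : Finset (Fin r → Fin m) := Finset.univ.filter (fun I => StrictMono I) with hs_def
  have hs : s.Nonempty :=
    ⟨Fin.castLE hr, by simp [hs_def, Fin.strictMono_castLE hr]⟩
  set f : (Fin r → EuclideanSpace ℝ (Fin m)) → (Fin r → Fin m) → ℝ :=
    fun ξ I => |(Matrix.of fun i j => (⟪b (I i), ξ j⟫ : ℝ)).det| with hf_def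
  have hfcont : ∀ I, Continuous fun ξ => f ξ I := by
    intro I
    have hd : Continuous fun ξ : Fin r → EuclideanSpace ℝ (Fin m) =>
        (Matrix.of fun i j => (⟪b (I i), ξ j⟫ : ℝ)).det :=
      Continuous.matrix_det <| continuous_matrix fun i j => by
        simp only [Matrix.of_apply]; exact Continuous.inner continuous_const (continuous_apply j)
    exact hd.abs
  set F : (Fin r → EuclideanSpace ℝ (Fin m)) → ℝ := fun ξ => s.sup' hs (f ξ) with hF_def
  have hFcont : Continuous F := by
    rw [continuous_iff_continuousAt]
    intro x
    exact Filter.Tendsto.finset_sup'_nhds_apply hs (fun I _ => (hfcont I).continuousAt)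
  set K : Set (Fin r → EuclideanSpace ℝ (Fin m)) := {ξ | Orthonormal ℝ ξ} with hK_def
  have hKne : K.Nonempty := by
    refine ⟨fun i => (EuclideanSpace.basisFun (Fin m) ℝ) (Fin.castLE hr i), ?_⟩
    exact (EuclideanSpace.basisFun (Fin m) ℝ).orthonormal.comp _ (Fin.castLE_injective hr)
  have hKc : IsCompact K := by
    have hKeq : K = ⋂ (i : Fin r), ⋂ (j : Fin r),
        {ξ : Fin r → EuclideanSpace ℝ (Fin m) | ⟪ξ i, ξ j⟫ = if i = j then (1:ℝ) else 0} := by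
      ext ξ
      simp only [hK_def, Set.mem_setOf_eq, Set.mem_iInter, orthonormal_iff_ite]
    have hclosed : IsClosed K := by
      rw [hKeq]
      exact isClosed_iInter fun i => isClosed_iInter fun j =>
        isClosed_eq (Continuous.inner (continuous_apply i) (continuous_apply j))
          continuous_const
    have hsubset : K ⊆ Set.univ.pi (fun _ : Fin r => Metric.sphere (0 : EuclideanSpace ℝ (Fin m)) 1) := by
      intro ξ hξ i _
      simpa [mem_sphere_iff_norm] using hξ.1 i
    exact (isCompact_univ_pi fun _ => isCompact_sphere 0 1).of_isClosed_subset hclosed hsubset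
  obtain ⟨ξ₀, hξ₀K, hmin⟩ := hKc.exists_isMinOn hKne hFcont.continuousOn
  refine ⟨F ξ₀, ?_, ?_⟩
  · obtain ⟨I₀, hI₀mono, hI₀ne⟩ := aux_pos b ξ₀ hξ₀K.linearIndependent
    have hI₀mem : I₀ ∈ s := by simp [hs_def, hI₀mono]
    calc (0:ℝ) < f ξ₀ I₀ := abs_pos.mpr hI₀ne
    _ ≤ F ξ₀ := Finset.le_sup' _ hI₀mem
  · intro ξ hξ
    set V := Submodule.span ℝ (Set.range ξ) with hV_def
    have hdim : Module.finrank ℝ V = r := by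
      rw [hV_def, finrank_span_eq_card hξ, Fintype.card_fin]
    set o := (stdOrthonormalBasis ℝ V).reindex (finCongr hdim) with ho_def
    set η : Fin r → EuclideanSpace ℝ (Fin m) := fun k => (o k : EuclideanSpace ℝ (Fin m)) with hη_def
    have hη : Orthonormal ℝ η := by
      have ho := o.orthonormal
      constructor
      · intro i
        exact ho.1 i
      · intro i j hij
        exact ((Submodule.coe_inner V (o i) (o j)).symm).trans (ho.2 hij)
    have hmemV : ∀ j, ξ j ∈ V := fun j => Submodule.subset_span ⟨j, rfl⟩
    set S : Matrix (Fin r) (Fin r) ℝ := Matrix.of fun k j => ⟪η k, ξ j⟫ with hS_def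
    have hexp : ∀ j, ξ j = ∑ k, S k j • η k := by
      intro j
      have hrepr := o.sum_repr ⟨ξ j, hmemV j⟩
      have h2 : (↑(∑ i : Fin r, o.repr ⟨ξ j, hmemV j⟩ i • o i) :
          EuclideanSpace ℝ (Fin m)) = ξ j :=
        congrArg (Subtype.val : V → EuclideanSpace ℝ (Fin m)) hrepr
      rw [← h2, Submodule.coe_sum]
      apply Finset.sum_congr rfl
      intro k _
      rw [Submodule.coe_smul]
      congr 1
      rw [o.repr_apply_apply]
      rw [Submodule.coe_inner]
      rfl
    have hinner_η : ∀ k l, ⟪η k, η l⟫ = if k = l then (1:ℝ) else 0 :=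
      orthonormal_iff_ite.mp hη
    have hGram : (Matrix.of fun i j => (⟪ξ i, ξ j⟫ : ℝ)) = Sᵀ * S := by
      ext i j
      rw [Matrix.mul_apply, Matrix.of_apply, hexp i, hexp j, sum_inner]
      apply Finset.sum_congr rfl
      intro k _
      rw [real_inner_smul_left, inner_sum]
      simp only [real_inner_smul_right, hinner_η]
      simp [Matrix.transpose_apply, mul_ite, mul_comm]
    have hsqrt : Real.sqrt ((Matrix.of fun i j => (⟪ξ i, ξ j⟫ : ℝ)).det) = |S.det| := by
      rw [hGram, Matrix.det_mul, Matrix.det_transpose, ← sq, Real.sqrt_sq_eq_abs]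
    obtain ⟨I, hImem, hIeq⟩ := Finset.exists_mem_eq_sup' hs (f η)
    have hImono : StrictMono I := by
      rw [hs_def] at hImem
      exact (Finset.mem_filter.mp hImem).2
    have hM : (Matrix.of fun i j => (⟪b (I i), ξ j⟫ : ℝ))
        = (Matrix.of fun i k => (⟪b (I i), η k⟫ : ℝ)) * S := by
      ext i j
      rw [Matrix.mul_apply, Matrix.of_apply, hexp j, inner_sum]
      apply Finset.sum_congr rfl
      intro k _
      rw [real_inner_smul_right]
      simp [mul_comm]
    refine ⟨I, hImono, ?_⟩
    have hηK : η ∈ K := hη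
    have hle : F ξ₀ ≤ F η := hmin hηK
    calc F ξ₀ * Real.sqrt ((Matrix.of fun i j => (⟪ξ i, ξ j⟫ : ℝ)).det)
        = F ξ₀ * |S.det| := by rw [hsqrt]
      _ ≤ F η * |S.det| := mul_le_mul_of_nonneg_right hle (abs_nonneg _)
      _ = f η I * |S.det| := by
          show s.sup' hs (f η) * |S.det| = _
          rw [hIeq]
      _ = |(Matrix.of fun i k => (⟪b (I i), η k⟫ : ℝ)).det * S.det| := by
          rw [hf_def, abs_mul]
      _ = |(Matrix.of fun i j => (⟪b (I i), ξ j⟫ : ℝ)).det| := by rw [hM, Matrix.det_mul]
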